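/- Let n ∈ (0,2) and define κ̄_n as the unique positive solution of 1 = κ^{2-n} ∫₀^κ a^{n-1} e^{(a²-κ²)/2} da. Then κ̄_n / √(2 ln(1/(2-n))) → 1 as n → 2⁻. -/

import Mathlib

open Real MeasureTheory Filter intervalIntegral


lemma exp_integral (c : ℝ) :
    ∫ a in (0:ℝ)..c, a * Real.exp ((a ^ 2 - c ^ 2) / 2) = 1 - Real.exp (-c ^ 2 / 2) := by
  have hd : ∀ a ∈ Set.uIcc (0:ℝ) c,
      HasDerivAt (fun x => Real.exp ((x ^ 2 - c ^ 2) / 2))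
        (a * Real.exp ((a ^ 2 - c ^ 2) / 2)) a := by
    intro a _
    have h1 : HasDerivAt (fun x : ℝ => (x ^ 2 - c ^ 2) / 2) a a := by
      have := ((hasDerivAt_pow 2 a).sub_const (c ^ 2)).div_const 2
      simpa using this
    have := h1.exp
    convert this using 1
    ring
  have hint : IntervalIntegrable (fun a => a * Real.exp ((a ^ 2 - c ^ 2) / 2)) volume 0 c := by
    apply Continuous.intervalIntegrable; continuity
  rw [integral_eq_sub_of_hasDerivAt hd hint]
  norm_num

lemma keyIneq (n c : ℝ) (hn1 : 1 < n) (hn2 : n < 2) (hc : 0 < c)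
    (hE : 1 = c ^ (2 - n) * ∫ a in (0:ℝ)..c, a ^ (n - 1) * Real.exp ((a ^ 2 - c ^ 2) / 2)) :
    Real.exp (-c ^ 2 / 2) ≤ (2 - n) * c ^ 2 / 2 ∧
    (2 ≤ c ^ 2 → (2 - n) / (4 * Real.exp 1 * c ^ 2) ≤ Real.exp (-c ^ 2 / 2)) := by
  have hrk : Continuous fun a : ℝ => a ^ (n - 1) := by
    rw [continuous_iff_continuousAt]
    intro a
    exact Real.continuousAt_rpow_const a (n - 1) (Or.inr (by linarith))
  have hcE : Continuous fun a : ℝ => Real.exp ((a ^ 2 - c ^ 2) / 2) :=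
    Real.continuous_exp.comp (((continuous_pow 2).sub continuous_const).div_const 2)
  set g : ℝ → ℝ := fun a => c ^ (2 - n) * a ^ (n - 1) - a with hg
  set E : ℝ → ℝ := fun a => Real.exp ((a ^ 2 - c ^ 2) / 2) with hEdef
  have hcg : Continuous g := by
    apply Continuous.sub (Continuous.mul continuous_const hrk) continuous_id
  have hcgE : Continuous fun a => g a * E a := hcg.mul hcE
  have int_f1 : IntervalIntegrable (fun a => a ^ (n - 1) * E a) volume 0 c :=
    (hrk.mul hcE).intervalIntegrable _ _
  have int_f2 : IntervalIntegrable (fun a => a * E a) volume 0 c :=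
    (continuous_id.mul hcE).intervalIntegrable _ _
  -- positivity of g on [0,c]
  have g_nonneg : ∀ a ∈ Set.Icc (0:ℝ) c, 0 ≤ g a := by
    intro a ha
    rcases eq_or_lt_of_le ha.1 with h0 | h0
    · simp [hg, ← h0, Real.zero_rpow (show n - 1 ≠ 0 by intro h; linarith [sub_eq_zero.mp h])]
    · have h1 : a = a ^ (n - 1) * a ^ (2 - n) := by
        rw [← Real.rpow_add h0, show n - 1 + (2 - n) = 1 by ring, Real.rpow_one]
      have h2 : a ^ (2 - n) ≤ c ^ (2 - n) :=
        Real.rpow_le_rpow h0.le ha.2 (by linarith)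
      have h3 : a ≤ c ^ (2 - n) * a ^ (n - 1) := by
        calc a = a ^ (n - 1) * a ^ (2 - n) := h1
        _ ≤ a ^ (n - 1) * c ^ (2 - n) :=
          mul_le_mul_of_nonneg_left h2 (Real.rpow_nonneg h0.le _)
        _ = c ^ (2 - n) * a ^ (n - 1) := by ring
      simp [hg]; linarith
  -- the key identity
  have hJ : ∫ a in (0:ℝ)..c, g a * E a = Real.exp (-c ^ 2 / 2) := by
    have h1 : ∀ a : ℝ, g a * E a =
        c ^ (2 - n) * (a ^ (n - 1) * E a) - a * E a := by intro a; simp [hg]; ring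
    rw [intervalIntegral.integral_congr (g := fun a =>
      c ^ (2 - n) * (a ^ (n - 1) * E a) - a * E a) (fun a _ => h1 a)]
    rw [intervalIntegral.integral_sub (int_f1.const_mul _) int_f2,
      intervalIntegral.integral_const_mul]
    have h2 := exp_integral c
    rw [hEdef]
    rw [h2, ← hE]
    ring
  constructor
  · -- upper bound (A)
    have hmono : ∫ a in (0:ℝ)..c, g a * E a ≤ ∫ a in (0:ℝ)..c, g a := by
      apply intervalIntegral.integral_mono_on hc.le (hcgE.intervalIntegrable _ _)
        (hcg.intervalIntegrable _ _)
      intro a ha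
      have hE1 : E a ≤ 1 := by
        rw [hEdef]
        apply Real.exp_le_one_iff.mpr
        nlinarith [ha.1, ha.2]
      exact mul_le_of_le_one_right (g_nonneg a ha) hE1
    have hgint : ∫ a in (0:ℝ)..c, g a = c ^ 2 / n - c ^ 2 / 2 := by
      simp only [hg]
      rw [intervalIntegral.integral_sub
        (((hrk.intervalIntegrable _ _).const_mul _ : _))
        ((continuous_id' : Continuous fun a : ℝ => a).intervalIntegrable _ _)]
      rw [intervalIntegral.integral_const_mul]
      rw [integral_rpow (Or.inl (by linarith : (-1:ℝ) < n - 1))]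
      rw [show n - 1 + 1 = n by ring, Real.zero_rpow (by linarith : n ≠ 0)]
      rw [integral_id]
      have hcc : c ^ (2 - n) * c ^ n = c ^ 2 := by
        rw [← Real.rpow_add hc, show (2 - n + n : ℝ) = ((2:ℕ):ℝ) by push_cast; ring,
          Real.rpow_natCast]
      field_simp
      first
      | exact hcc
      | (rw [mul_comm (c ^ n) (c ^ (2 - n))]; exact hcc)
      | (rw [← hcc]; ring)
    have hfin : c ^ 2 / n - c ^ 2 / 2 ≤ (2 - n) * c ^ 2 / 2 := by
      have h0 : (0:ℝ) < n := by linarith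
      rw [sub_le_iff_le_add, div_le_iff₀ h0]
      nlinarith [sq_nonneg c, mul_nonneg (mul_nonneg (by linarith : (0:ℝ) ≤ n - 1)
        (by linarith : (0:ℝ) ≤ 2 - n)) (sq_nonneg c)]
    calc Real.exp (-c ^ 2 / 2) = ∫ a in (0:ℝ)..c, g a * E a := hJ.symm
      _ ≤ ∫ a in (0:ℝ)..c, g a := hmono
      _ = c ^ 2 / n - c ^ 2 / 2 := hgint
      _ ≤ (2 - n) * c ^ 2 / 2 := hfin
  · -- lower bound (B)
    intro h2c
    obtain ⟨a₀, ha₀def⟩ : ∃ a₀ : ℝ, a₀ = c - 1 / c := ⟨_, rfl⟩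
    have hinvc : 0 < 1 / c := by positivity
    have ha₀ : c / 2 ≤ a₀ := by
      rw [ha₀def, le_sub_iff_add_le]
      have : 1 / c ≤ c / 2 := by
        rw [div_le_div_iff₀ hc (by norm_num)]
        nlinarith
      linarith
    have ha₀0 : 0 ≤ a₀ := le_trans (by positivity) ha₀
    have ha₀c : a₀ ≤ c := by rw [ha₀def]; linarith
    have hsplit : (∫ a in (0:ℝ)..a₀, g a * E a) + (∫ a in a₀..c, g a * E a)
        = ∫ a in (0:ℝ)..c, g a * E a :=
      intervalIntegral.integral_add_adjacent_intervals
        (hcgE.intervalIntegrable _ _) (hcgE.intervalIntegrable _ _)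
    have hpos1 : 0 ≤ ∫ a in (0:ℝ)..a₀, g a * E a := by
      apply intervalIntegral.integral_nonneg ha₀0
      intro a ha
      exact mul_nonneg (g_nonneg a ⟨ha.1, le_trans ha.2 ha₀c⟩) (Real.exp_nonneg _)
    have hmono2 : ∫ a in a₀..c, ((2 - n) / (2 * Real.exp 1)) * (c - a)
        ≤ ∫ a in a₀..c, g a * E a := by
      apply intervalIntegral.integral_mono_on ha₀c
        ((continuous_const.mul (continuous_const.sub continuous_id')).intervalIntegrable _ _)
        (hcgE.intervalIntegrable _ _)
      intro a ha
      have hap : 0 < a := lt_of_lt_of_le (half_pos hc) (le_trans ha₀ ha.1)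
      have hac : a ≤ c := ha.2
      -- key1 : (2-n)*(c-a)/2 ≤ g a
      have hg1 : c ^ (2 - n) * a ^ (n - 1) = a * (c / a) ^ (2 - n) := by
        rw [Real.div_rpow hc.le hap.le]
        rw [show a ^ (n - 1) = a / a ^ (2 - n) by
          rw [show n - 1 = 1 - (2 - n) by ring, Real.rpow_sub hap, Real.rpow_one]]
        field_simp
      have hg2 : 1 + (2 - n) * Real.log (c / a) ≤ (c / a) ^ (2 - n) := by
        rw [Real.rpow_def_of_pos (by positivity)]
        have := Real.add_one_le_exp (Real.log (c / a) * (2 - n))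
        linarith
      have hg3 : (c - a) / c ≤ Real.log (c / a) := by
        have h4 := Real.log_le_sub_one_of_pos (show (0:ℝ) < a / c by positivity)
        have h5 : Real.log (c / a) = -Real.log (a / c) := by
          rw [Real.log_div hc.ne' hap.ne', Real.log_div hap.ne' hc.ne']; ring
        rw [h5]
        have h6 : (c - a) / c = 1 - a / c := by field_simp
        rw [h6]; linarith
    -- g a ≥ a * (2-n) * log(c/a) ≥ (c/2)(2-n)(c-a)/c = (2-n)(c-a)/2
      have hlogpos : 0 ≤ Real.log (c / a) := le_trans (div_nonneg (by linarith) hc.le) hg3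
      have key1 : (2 - n) * (c - a) / 2 ≤ g a := by
        have e1 : g a = a * ((c / a) ^ (2 - n) - 1) := by
          simp only [hg]; rw [hg1]; ring
        rw [e1]
        have e2 : (2 - n) * Real.log (c / a) ≤ (c / a) ^ (2 - n) - 1 := by linarith
        have e3 : (2 - n) * ((c - a) / c) ≤ (2 - n) * Real.log (c / a) :=
          mul_le_mul_of_nonneg_left hg3 (by linarith)
        have e4 : a * ((2 - n) * ((c - a) / c)) ≤ a * ((c / a) ^ (2 - n) - 1) :=
          mul_le_mul_of_nonneg_left (le_trans e3 e2) hap.le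
        refine le_trans ?_ e4
        have h7 : c / 2 ≤ a := le_trans ha₀ ha.1
        have hfrac : 0 ≤ (2 - n) * ((c - a) / c) :=
          mul_nonneg (by linarith) (div_nonneg (by linarith) hc.le)
        calc (2 - n) * (c - a) / 2 = (c / 2) * ((2 - n) * ((c - a) / c)) := by
              field_simp; try ring
          _ ≤ a * ((2 - n) * ((c - a) / c)) := mul_le_mul_of_nonneg_right h7 hfrac
      have key2 : Real.exp (-1 : ℝ) ≤ E a := by
        rw [hEdef]
        apply Real.exp_le_exp.mpr
        have h8 : a₀ ^ 2 ≤ a ^ 2 := pow_le_pow_left₀ ha₀0 ha.1 2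
        have hc2 : a₀ ^ 2 = c ^ 2 - 2 + (1 / c) ^ 2 := by rw [ha₀def]; field_simp; ring
        nlinarith [sq_nonneg (1 / c)]
      have key0 : 0 ≤ (2 - n) * (c - a) / 2 := by
        have h9 : 0 ≤ c - a := by linarith
        have := mul_nonneg (by linarith : (0:ℝ) ≤ 2 - n) h9
        linarith
      calc ((2 - n) / (2 * Real.exp 1)) * (c - a)
          = ((2 - n) * (c - a) / 2) * Real.exp (-1) := by
            rw [Real.exp_neg]; field_simp; try ring
        _ ≤ g a * E a := mul_le_mul key1 key2 (Real.exp_nonneg _) (le_trans key0 key1)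
    have hlin : ∫ a in a₀..c, ((2 - n) / (2 * Real.exp 1)) * (c - a)
        = (2 - n) / (4 * Real.exp 1 * c ^ 2) := by
      rw [intervalIntegral.integral_const_mul]
      rw [intervalIntegral.integral_sub (intervalIntegrable_const)
        ((continuous_id' : Continuous fun a : ℝ => a).intervalIntegrable _ _)]
      rw [intervalIntegral.integral_const, integral_id, ha₀def]
      rw [smul_eq_mul]
      field_simp
      ring
    rw [← hJ, ← hsplit, ← hlin]
    linarith [hmono2]


lemma numeric (x L : ℝ) (hx : 0 < x) (hL : 2 ≤ L)
    (hA : Real.exp (-x / 2) ≤ Real.exp (-L) * x / 2)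
    (hB : 2 ≤ x → Real.exp (-L) / (4 * Real.exp 1 * x) ≤ Real.exp (-x / 2)) :
    2 * L - 2 * Real.log (4 * L + 24) ≤ x ∧ x ≤ 2 * L + 8 + 2 * Real.log (4 * L + 24) := by
  have hlogx : Real.log x ≤ x / 4 + 2 := by
    have hs := Real.log_le_sub_one_of_pos (Real.sqrt_pos.mpr hx)
    rw [Real.log_sqrt hx.le] at hs
    nlinarith [Real.sq_sqrt hx.le, sq_nonneg (Real.sqrt x - 4), Real.sqrt_nonneg x]
  have hlog2 : (0:ℝ) ≤ Real.log 2 := Real.log_nonneg one_le_two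
  have l1 : -x / 2 ≤ -L + Real.log x - Real.log 2 := by
    have h := Real.log_le_log (Real.exp_pos _) hA
    rw [Real.log_exp] at h
    rwa [Real.log_div (mul_pos (Real.exp_pos _) hx).ne' two_ne_zero,
      Real.log_mul (Real.exp_ne_zero _) hx.ne', Real.log_exp] at h
  have lower0 : 2 * L - 2 * Real.log x ≤ x := by linarith
  have hx2 : (2:ℝ) ≤ x := by
    by_contra hcon
    push_neg at hcon
    have e1 : Real.exp (-L) ≤ Real.exp (-2 : ℝ) := Real.exp_le_exp.mpr (by linarith)
    have e2a : Real.exp (-L) * x ≤ Real.exp (-2:ℝ) * x :=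
      mul_le_mul_of_nonneg_right e1 hx.le
    have e2b : Real.exp (-2:ℝ) * x < Real.exp (-2:ℝ) * 2 :=
      mul_lt_mul_of_pos_left hcon (Real.exp_pos _)
    have e3 : Real.exp (-2 : ℝ) < Real.exp (-x / 2) := Real.exp_lt_exp.mpr (by linarith)
    linarith
  have hlog4 : Real.log 4 ≤ 2 := by
    rw [show (4:ℝ) = 2 ^ 2 by norm_num, Real.log_pow]
    have := Real.log_two_lt_d9
    push_cast
    linarith
  have l2 : -L - (Real.log 4 + 1 + Real.log x) ≤ -x / 2 := by
    have h := Real.log_le_log (by positivity) (hB hx2)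
    rw [Real.log_exp] at h
    rwa [Real.log_div (Real.exp_ne_zero _)
        (mul_pos (mul_pos (by norm_num : (0:ℝ) < 4) (Real.exp_pos 1)) hx).ne',
      Real.log_exp,
      Real.log_mul (mul_pos (by norm_num : (0:ℝ) < 4) (Real.exp_pos 1)).ne' hx.ne',
      Real.log_mul (by norm_num : (4:ℝ) ≠ 0) (Real.exp_ne_zero _),
      Real.log_exp] at h
  have upper0 : x ≤ 2 * L + 6 + 2 * Real.log x := by linarith
  have hxu : x ≤ 4 * L + 24 := by linarith
  have hlogle : Real.log x ≤ Real.log (4 * L + 24) := Real.log_le_log hx hxu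
  exact ⟨by linarith, by linarith⟩

lemma logdiv_lim : Filter.Tendsto (fun y : ℝ => Real.log (4 * y + 24) / y) atTop (nhds 0) := by
  have h1 : Real.log =o[atTop] id := Real.isLittleO_log_id_atTop
  have h2 : Filter.Tendsto (fun y : ℝ => 4 * y + 24) atTop atTop :=
    Filter.tendsto_atTop_add_const_right _ 24
      (Filter.Tendsto.const_mul_atTop (by norm_num : (0:ℝ) < 4) tendsto_id)
  have h3 := h1.comp_tendsto h2
  have h4 : (fun y : ℝ => 4 * y + 24) =O[atTop] (fun y => y) := by
    apply Asymptotics.isBigO_iff.mpr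
    refine ⟨28, ?_⟩
    filter_upwards [Filter.eventually_ge_atTop (1:ℝ)] with y hy
    rw [Real.norm_eq_abs, Real.norm_eq_abs, abs_of_nonneg (by linarith), abs_of_nonneg (by linarith)]
    linarith
  have h5 : (fun y : ℝ => Real.log (4 * y + 24)) =o[atTop] (fun y => y) := by
    have := h3.trans_isBigO h4
    exact this
  exact h5.tendsto_div_nhds_zero

lemma htendL : Filter.Tendsto (fun n : ℝ => Real.log (1 / (2 - n)))
    (nhdsWithin 2 (Set.Ioo 0 2)) atTop := by
  have h1 : Filter.Tendsto (fun n : ℝ => 2 - n) (nhdsWithin 2 (Set.Ioo 0 2))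
      (nhdsWithin 0 (Set.Ioi 0)) := by
    apply tendsto_nhdsWithin_of_tendsto_nhds_of_eventually_within
    · have hc : Continuous fun n : ℝ => 2 - n := continuous_const.sub continuous_id
      have h0 : Filter.Tendsto (fun n : ℝ => 2 - n) (nhds 2) (nhds 0) := by
        have := hc.tendsto (2:ℝ)
        simpa using this
      exact h0.mono_left nhdsWithin_le_nhds
    · filter_upwards [self_mem_nhdsWithin] with n hn
      exact sub_pos.mpr hn.2
  have h2 : Filter.Tendsto (fun y : ℝ => 1 / y) (nhdsWithin 0 (Set.Ioi 0)) atTop := by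
    simpa [one_div] using tendsto_inv_nhdsGT_zero
  exact Real.tendsto_log_atTop.comp (h2.comp h1)


theorem stmt7 (κ : ℝ → ℝ)
    (hκ : ∀ n ∈ Set.Ioo (0:ℝ) 2, 0 < κ n ∧
      1 = (κ n) ^ (2 - n) * ∫ a in (0:ℝ)..(κ n), a ^ (n - 1) * Real.exp ((a ^ 2 - (κ n) ^ 2) / 2))
    (huniq : ∀ n ∈ Set.Ioo (0:ℝ) 2, ∀ c : ℝ, 0 < c →
      1 = c ^ (2 - n) * ∫ a in (0:ℝ)..c, a ^ (n - 1) * Real.exp ((a ^ 2 - c ^ 2) / 2) → c = κ n) :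
    Filter.Tendsto (fun n => κ n / Real.sqrt (2 * Real.log (1 / (2 - n))))
      (nhdsWithin 2 (Set.Ioo 0 2)) (nhds 1) := by
  have hmem : ∀ᶠ n in nhdsWithin (2:ℝ) (Set.Ioo 0 2), n ∈ Set.Ioo (0:ℝ) 2 :=
    self_mem_nhdsWithin
  have hev2 : ∀ᶠ n in nhdsWithin (2:ℝ) (Set.Ioo 0 2), 2 ≤ Real.log (1 / (2 - n)) :=
    htendL.eventually_ge_atTop 2
  have hkey : ∀ᶠ n in nhdsWithin (2:ℝ) (Set.Ioo 0 2),
      2 * Real.log (1/(2-n)) - 2 * Real.log (4 * Real.log (1/(2-n)) + 24) ≤ (κ n) ^ 2 ∧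
      (κ n) ^ 2 ≤ 2 * Real.log (1/(2-n)) + 8 + 2 * Real.log (4 * Real.log (1/(2-n)) + 24) := by
    filter_upwards [hmem, hev2] with n hn hL2
    have h2n : 0 < 2 - n := by linarith [hn.2]
    have hexp : Real.exp (-(Real.log (1/(2-n)))) = 2 - n := by
      rw [one_div, Real.log_inv, neg_neg, Real.exp_log h2n]
    have hn1 : 1 < n := by
      have e1 : 2 - n ≤ Real.exp (-2 : ℝ) := by
        rw [← hexp]; exact Real.exp_le_exp.mpr (by linarith)
      have e2 : Real.exp (-2 : ℝ) < 1 := Real.exp_lt_one_iff.mpr (by norm_num)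
      linarith
    obtain ⟨hκpos, hEq⟩ := hκ n hn
    have hKey := keyIneq n (κ n) hn1 hn.2 hκpos hEq
    have hx : 0 < (κ n) ^ 2 := pow_pos hκpos 2
    apply numeric ((κ n) ^ 2) (Real.log (1/(2-n))) hx hL2
    · rw [hexp]; exact hKey.1
    · intro h2x; rw [hexp]; exact hKey.2 h2x
  have hsq : Filter.Tendsto (fun n => (κ n) ^ 2 / (2 * Real.log (1/(2-n))))
      (nhdsWithin (2:ℝ) (Set.Ioo 0 2)) (nhds 1) := by
    have hlow : Filter.Tendsto (fun y : ℝ => 1 - Real.log (4 * y + 24) / y) atTop (nhds 1) := by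
      have := tendsto_const_nhds (α := ℝ) (x := (1:ℝ)) (f := atTop).sub logdiv_lim
      simpa using this
    have hupfrac : Filter.Tendsto (fun y : ℝ => (8 + 2 * Real.log (4 * y + 24)) / (2 * y))
        atTop (nhds 0) := by
      have h48 : Filter.Tendsto (fun y : ℝ => 4 / y) atTop (nhds 0) :=
        tendsto_const_nhds.div_atTop tendsto_id
      have heq : (fun y : ℝ => (8 + 2 * Real.log (4 * y + 24)) / (2 * y))
          = fun y : ℝ => 4 / y + Real.log (4 * y + 24) / y := by
        funext y
        rcases eq_or_ne y 0 with h | h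
        · simp [h]
        · field_simp
          ring
      rw [heq]
      simpa using h48.add logdiv_lim
    have hup : Filter.Tendsto (fun y : ℝ => 1 + (8 + 2 * Real.log (4 * y + 24)) / (2 * y))
        atTop (nhds 1) := by
      have := tendsto_const_nhds (α := ℝ) (x := (1:ℝ)) (f := atTop).add hupfrac
      simpa using this
    apply tendsto_of_tendsto_of_tendsto_of_le_of_le' (hlow.comp htendL) (hup.comp htendL)
    · filter_upwards [hkey, hev2] with n hk hL2
      have hLpos : (0:ℝ) < Real.log (1/(2-n)) := by linarith
      simp only [Function.comp]
      rw [le_div_iff₀ (by positivity : (0:ℝ) < 2 * Real.log (1/(2-n)))]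
      have heq : (1 - Real.log (4 * Real.log (1/(2-n)) + 24) / Real.log (1/(2-n)))
            * (2 * Real.log (1/(2-n)))
          = 2 * Real.log (1/(2-n)) - 2 * Real.log (4 * Real.log (1/(2-n)) + 24) := by
        field_simp
      rw [heq]
      exact hk.1
    · filter_upwards [hkey, hev2] with n hk hL2
      have hLpos : (0:ℝ) < Real.log (1/(2-n)) := by linarith
      simp only [Function.comp]
      rw [div_le_iff₀ (by positivity : (0:ℝ) < 2 * Real.log (1/(2-n)))]
      have heq : (1 + (8 + 2 * Real.log (4 * Real.log (1/(2-n)) + 24))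
            / (2 * Real.log (1/(2-n)))) * (2 * Real.log (1/(2-n)))
          = 2 * Real.log (1/(2-n)) + 8 + 2 * Real.log (4 * Real.log (1/(2-n)) + 24) := by
        field_simp
        ring
      rw [heq]
      exact hk.2
  have hsqrt := (Real.continuous_sqrt.tendsto 1).comp hsq
  rw [Real.sqrt_one] at hsqrt
  apply hsqrt.congr'
  filter_upwards [hmem, hev2] with n hn hL2
  have hκpos := (hκ n hn).1
  simp only [Function.comp]
  rw [Real.sqrt_div (sq_nonneg _), Real.sqrt_sq hκpos.le]
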